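/- Let (X,d) be an ∞-convex metric space. Then every lower semicontinuous quasi-convex function f : X → (−∞,∞] is lower semicontinuous with respect to the co-convex topology τ_co, i.e. for every net (x_i) converging to x in τ_co with x ∈ dom f one has liminf f(x_i) ≥ f(x). In particular, for each fixed y ∈ X the function x ↦ d(x,y) is τ_co-lower semicontinuous. -/

import Mathlib

open Filter Topology Metric Set MeasureTheory
open scoped ENNReal

section Defs

variable (X : Type) [MetricSpace X]

/-- `m` is a midpoint of `x` and `y`. -/
def IsMidpoint {X : Type} [MetricSpace X] (x y m : X) : Prop :=
  dist x m = dist x y / 2 ∧ dist y m = dist x y / 2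

/-- `(X,d)` admits midpoints. -/
def AdmitsMidpoints : Prop := ∀ x y : X, ∃ m, IsMidpoint x y m

/-- The `p`-mean of two nonnegative reals, `p ∈ [1,∞]`. -/
noncomputable def pMean (p : ℝ≥0∞) (a b : ℝ) : ℝ :=
  if p = ∞ then max a b else ((a ^ p.toReal + b ^ p.toReal) / 2) ^ (1 / p.toReal)

/-- `p`-convexity. -/
def PConvex (p : ℝ≥0∞) : Prop :=
  AdmitsMidpoints X ∧ ∀ x y z m : X, IsMidpoint x y m →
    dist m z ≤ pMean p (dist x z) (dist y z)

/-- strict `p`-convexity. -/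
def StrictlyPConvex (p : ℝ≥0∞) : Prop :=
  AdmitsMidpoints X ∧ ∀ x y z m : X, IsMidpoint x y m →
    (if p = 1 then |dist x z - dist y z| < dist x y else x ≠ y) →
    dist m z < pMean p (dist x z) (dist y z)

/-- uniform `p`-convexity. -/
def UniformlyPConvex (p : ℝ≥0∞) : Prop :=
  AdmitsMidpoints X ∧ ∀ ε : ℝ, 0 < ε → ∃ ρ : ℝ, ρ ∈ Set.Ioo (0:ℝ) 1 ∧
    ∀ x y z m : X, IsMidpoint x y m →
      (if p = 1 then |dist x z - dist y z| + ε * pMean 1 (dist x z) (dist y z) < dist x y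
        else ε * pMean p (dist x z) (dist y z) < dist x y) →
      dist m z ≤ (1 - ρ) * pMean p (dist x z) (dist y z)

/-- Busemann non-positive curvature condition. -/
def Busemann : Prop :=
  AdmitsMidpoints X ∧ ∀ x₀ x₁ y₀ y₁ xm ym : X,
    IsMidpoint x₀ x₁ xm → IsMidpoint y₀ y₁ ym →
      dist xm ym ≤ (dist x₀ y₀ + dist x₁ y₁) / 2

/-- `γ` (restricted to `[0,1]`) is a geodesic from `x` to `y`. -/
def IsGeodesic {X : Type} [MetricSpace X] (γ : ℝ → X) (x y : X) : Prop :=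
  γ 0 = x ∧ γ 1 = y ∧ ∀ s ∈ Set.Icc (0:ℝ) 1, ∀ t ∈ Set.Icc (0:ℝ) 1,
    dist (γ s) (γ t) = |s - t| * dist x y

/-- A subset is (geodesically) convex if it contains all geodesics between its points. -/
def GConvex {X : Type} [MetricSpace X] (C : Set X) : Prop :=
  ∀ x ∈ C, ∀ y ∈ C, ∀ γ : ℝ → X, IsGeodesic γ x y → ∀ t ∈ Set.Icc (0:ℝ) 1, γ t ∈ C

/-- The convex hull: the smallest convex set containing `A`. -/
def gConvexHull {X : Type} [MetricSpace X] (A : Set X) : Set X :=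
  ⋂₀ {C : Set X | GConvex C ∧ A ⊆ C}

/-- `∞`-convexity. -/
def InftyConvex : Prop :=
  AdmitsMidpoints X ∧ ∀ x y z m : X, IsMidpoint x y m →
    dist m z ≤ max (dist x z) (dist y z)

/-- strict `∞`-convexity. -/
def StrictlyInftyConvex : Prop :=
  AdmitsMidpoints X ∧ ∀ x y z m : X, IsMidpoint x y m → x ≠ y →
    dist m z < max (dist x z) (dist y z)

/-- uniform `∞`-convexity. -/
def UniformlyInftyConvex : Prop :=
  AdmitsMidpoints X ∧ ∀ ε : ℝ, 0 < ε → ∃ ρ : ℝ, ρ ∈ Set.Ioo (0:ℝ) 1 ∧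
    ∀ x y z m : X, IsMidpoint x y m →
      ε * max (dist x z) (dist y z) < dist x y →
      dist m z ≤ (1 - ρ) * max (dist x z) (dist y z)

/-- `ρ` works as a modulus of nearly uniform convexity for the parameters `ε`, `R`:
for every infinite `ε`-separated family in a ball of radius `r ≤ R` around `y`, the ball
`B_{(1-ρ)r}(y)` intersects the closed convex hull of the family. -/
def NUCModulus (ε R ρ : ℝ) : Prop :=
  ∀ (ι : Type) [Infinite ι], ∀ (x : ι → X) (y : X) (r : ℝ), r ≤ R →
    (∀ i j : ι, i ≠ j → ε ≤ dist (x i) (x j)) → (∀ i, dist (x i) y ≤ r) →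
    (Metric.closedBall y ((1 - ρ) * r) ∩ closure (gConvexHull (Set.range x))).Nonempty

/-- Nearly uniform convexity. -/
def NearlyUniformlyConvex : Prop :=
  InftyConvex X ∧ ∀ R : ℝ, 0 < R → ∀ ε : ℝ, 0 < ε → ∃ ρ : ℝ, 0 < ρ ∧ NUCModulus X ε R ρ

/-- Reflexivity: every decreasing directed family of nonempty bounded closed convex sets
has nonempty intersection. -/
def MetricReflexive : Prop :=
  ∀ (I : Type) [Nonempty I] [Preorder I] [IsDirected I (· ≤ ·)], ∀ C : I → Set X,
    (∀ i, (C i).Nonempty) → (∀ i, Bornology.IsBounded (C i)) → (∀ i, IsClosed (C i)) →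
    (∀ i, GConvex (C i)) → (∀ i j : I, j ≤ i → C i ⊆ C j) → (⋂ i, C i).Nonempty

/-- The co-convex topology: the weakest topology containing all complements of closed
convex sets. -/
def coConvexTopology : TopologicalSpace X :=
  TopologicalSpace.generateFrom {U : Set X | ∃ C : Set X, IsClosed C ∧ GConvex C ∧ U = Cᶜ}

/-- The set of limit points of the sequence `x` in the co-convex topology. -/
def coLim {X : Type} [MetricSpace X] (x : ℕ → X) : Set X :=
  {a : X | Filter.Tendsto x Filter.atTop (@nhds X (coConvexTopology X) a)}

/-- Countable reflexivity. -/
def CountableReflexive : Prop :=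
  MetricReflexive X ∧ ∀ x : ℕ → X, (coLim x).Nonempty →
    ∃ φ : ℕ → ℕ, StrictMono φ ∧
      coLim x = ⋂ m : ℕ, closure (gConvexHull ((fun n => x (φ n)) '' Set.Ici m))

/-- Quasi-convexity: all sublevel sets are convex. -/
def GQuasiConvex {X : Type} [MetricSpace X] (f : X → ℝ) : Prop :=
  ∀ c : ℝ, GConvex {x : X | f x ≤ c}

/-- Quasi-monotonicity: both quasi-convex and quasi-concave. -/
def GQuasiMonotone {X : Type} [MetricSpace X] (f : X → ℝ) : Prop :=
  GQuasiConvex f ∧ GQuasiConvex (fun x => -f x)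

/-- The `p`-mean for real `p ∈ [1,∞)`. -/
noncomputable def pMeanR (p a b : ℝ) : ℝ := ((a ^ p + b ^ p) / 2) ^ (1 / p)

/-- `p`-convexity for real `p`. -/
def PConvexR (p : ℝ) : Prop :=
  AdmitsMidpoints X ∧ ∀ x y z m : X, IsMidpoint x y m →
    dist m z ≤ pMeanR p (dist x z) (dist y z)

/-- strict `p`-convexity for real `p`. -/
def StrictlyPConvexR (p : ℝ) : Prop :=
  AdmitsMidpoints X ∧ ∀ x y z m : X, IsMidpoint x y m →
    (if p = 1 then |dist x z - dist y z| < dist x y else x ≠ y) →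
    dist m z < pMeanR p (dist x z) (dist y z)

/-- uniform `p`-convexity for real `p`. -/
def UniformlyPConvexR (p : ℝ) : Prop :=
  AdmitsMidpoints X ∧ ∀ ε : ℝ, 0 < ε → ∃ ρ : ℝ, ρ ∈ Set.Ioo (0:ℝ) 1 ∧
    ∀ x y z m : X, IsMidpoint x y m →
      ε * pMeanR p (dist x z) (dist y z) < dist x y →
      dist m z ≤ (1 - ρ) * pMeanR p (dist x z) (dist y z)

/-- `ω(z,(x_n)) = limsup_n d(z,x_n)`. -/
noncomputable def asymRadius {X : Type} [MetricSpace X] (x : ℕ → X) (z : X) : ℝ :=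
  Filter.limsup (fun n => dist z (x n)) Filter.atTop

/-- `a` is the (unique) asymptotic center of the sequence `x`. -/
def IsAsymptoticCenter {X : Type} [MetricSpace X] (x : ℕ → X) (a : X) : Prop :=
  (∀ z : X, asymRadius x a ≤ asymRadius x z) ∧
  ∀ b : X, (∀ z : X, asymRadius x b ≤ asymRadius x z) → b = a

/-- Weak sequential convergence: `a` is the asymptotic center of every subsequence. -/
def WeakSeqConv {X : Type} [MetricSpace X] (x : ℕ → X) (a : X) : Prop :=
  ∀ φ : ℕ → ℕ, StrictMono φ → IsAsymptoticCenter (fun n => x (φ n)) a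

end Defs

lemma gconvex_distBall {X : Type} [MetricSpace X] (h : InftyConvex X) (y : X) (c : ℝ) :
    GConvex {x : X | dist x y ≤ c} := by
  intro x hx z hz γ hγ t ht
  obtain ⟨h0, h1, hd⟩ := hγ
  have mid : ∀ s ∈ Set.Icc (0:ℝ) 1, ∀ u ∈ Set.Icc (0:ℝ) 1,
      IsMidpoint (γ s) (γ u) (γ ((s + u) / 2)) := by
    intro s hs u hu
    have hm : (s + u) / 2 ∈ Set.Icc (0:ℝ) 1 := by
      constructor
      · linarith [hs.1, hu.1]
      · linarith [hs.2, hu.2]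
    constructor
    · rw [hd s hs _ hm, hd s hs u hu, show s - (s + u)/2 = (s - u)/2 by ring,
        abs_div, abs_two]
      ring
    · rw [hd u hu _ hm, hd s hs u hu, show u - (s + u)/2 = -((s - u)/2) by ring,
        abs_neg, abs_div, abs_two]
      ring
  have dyadic : ∀ n : ℕ, ∀ k : ℕ, k ≤ 2 ^ n → dist (γ ((k : ℝ) / 2 ^ n)) y ≤ c := by
    intro n
    induction n with
    | zero =>
      intro k hk
      interval_cases k
      · simpa [h0] using hx
      · simpa [h1] using hz
    | succ n ih =>
      intro k hk
      rcases Nat.even_or_odd k with ⟨j, hj⟩ | ⟨j, hj⟩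
      · have hj' : j ≤ 2 ^ n := by omega
        have heq : ((k : ℝ)) / 2 ^ (n + 1) = (j : ℝ) / 2 ^ n := by
          subst hj; push_cast; ring
        rw [heq]; exact ih j hj'
      · have hj1 : j ≤ 2 ^ n := by omega
        have hj2 : j + 1 ≤ 2 ^ n := by omega
        have hmem : ∀ i : ℕ, i ≤ 2 ^ n → (i : ℝ) / 2 ^ n ∈ Set.Icc (0:ℝ) 1 := by
          intro i hi
          constructor
          · positivity
          · rw [div_le_one (by positivity)]
            exact_mod_cast hi
        have hmid := mid _ (hmem j hj1) _ (hmem (j+1) hj2)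
        have harg : (((j:ℝ) / 2 ^ n) + ((j+1:ℕ) : ℝ) / 2 ^ n) / 2 = (k : ℝ) / 2 ^ (n+1) := by
          subst hj; push_cast; ring
        rw [harg] at hmid
        calc dist (γ ((k : ℝ) / 2 ^ (n+1))) y
            ≤ max (dist (γ ((j:ℝ) / 2 ^ n)) y) (dist (γ (((j+1:ℕ):ℝ) / 2 ^ n)) y) :=
              h.2 _ _ _ _ hmid
          _ ≤ c := max_le (ih j hj1) (ih (j+1) hj2)
  have key : ∀ n : ℕ, dist (γ t) y ≤ c + dist x z * (1/2:ℝ) ^ n := by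
    intro n
    have h2n : (0:ℝ) < 2 ^ n := by positivity
    set k : ℕ := ⌊t * 2 ^ n⌋₊ with hk
    have ht0 : (0:ℝ) ≤ t * 2 ^ n := by
      have := ht.1; positivity
    have hfl : (k : ℝ) ≤ t * 2 ^ n := Nat.floor_le ht0
    have hfl2 : t * 2 ^ n < (k : ℝ) + 1 := Nat.lt_floor_add_one _
    have hkle : k ≤ 2 ^ n := by
      have hc : (k : ℝ) ≤ ((2 ^ n : ℕ) : ℝ) := by
        push_cast
        nlinarith [ht.2]
      exact_mod_cast hc
    have hql : (k : ℝ) / 2 ^ n ∈ Set.Icc (0:ℝ) 1 := by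
      constructor
      · positivity
      · rw [div_le_one h2n]; exact_mod_cast hkle
    have hle : (k : ℝ) / 2 ^ n ≤ t := by
      rw [div_le_iff₀ h2n]; exact hfl
    have hle2 : t ≤ ((k:ℝ) + 1) / 2 ^ n := by
      rw [le_div_iff₀ h2n]; linarith
    have hsplit : ((k:ℝ) + 1) / 2 ^ n = (k:ℝ) / 2 ^ n + 1 / 2 ^ n := by ring
    have hdiff : |t - (k : ℝ) / 2 ^ n| ≤ 1 / 2 ^ n := by
      rw [abs_le]
      constructor
      · have : (0:ℝ) < 1 / 2 ^ n := by positivity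
        linarith
      · rw [hsplit] at hle2; linarith
    have hdz : (0:ℝ) ≤ dist x z := dist_nonneg
    have hpow : (1/2:ℝ) ^ n = 1 / 2 ^ n := by
      rw [div_pow, one_pow]
    calc dist (γ t) y ≤ dist (γ t) (γ ((k:ℝ) / 2 ^ n)) + dist (γ ((k:ℝ) / 2 ^ n)) y :=
          dist_triangle _ _ _
      _ ≤ (1 / 2 ^ n) * dist x z + c := by
          rw [hd t ht _ hql]
          have h1' : |t - (k:ℝ) / 2 ^ n| * dist x z ≤ (1 / 2 ^ n) * dist x z :=
            mul_le_mul_of_nonneg_right hdiff hdz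
          linarith [dyadic n k hkle]
      _ = c + dist x z * (1/2:ℝ) ^ n := by rw [hpow]; ring
  have hlim : Filter.Tendsto (fun n : ℕ => c + dist x z * (1/2:ℝ) ^ n)
      Filter.atTop (nhds c) := by
    have hp := tendsto_pow_atTop_nhds_zero_of_lt_one (by norm_num : (0:ℝ) ≤ 1/2)
      (by norm_num : (1/2:ℝ) < 1)
    simpa using Filter.Tendsto.add (tendsto_const_nhds : Filter.Tendsto (fun _ : ℕ => c)
      Filter.atTop (nhds c)) (hp.const_mul (dist x z))
  exact ge_of_tendsto' hlim key

/-- On an `∞`-convex space, every lower semicontinuous quasi-convex function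
is lower semicontinuous for the co-convex topology; in particular `d(·,y)` is. -/
theorem quasiConvex_weakly_lsc (X : Type) [MetricSpace X] (h : InftyConvex X) :
    (∀ f : X → EReal, (∀ x, f x ≠ ⊥) → LowerSemicontinuous f →
      (∀ c : EReal, GConvex {x : X | f x ≤ c}) →
      @LowerSemicontinuous X EReal (coConvexTopology X) _ f) ∧
    ∀ y : X, @LowerSemicontinuous X ℝ (coConvexTopology X) _ (fun x => dist x y) := by
  have hball : ∀ (y : X) (c : ℝ), GConvex {x : X | dist x y ≤ c} := gconvex_distBall h
  constructor
  · intro f _ hf hconv x c hc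
    have hclosed : IsClosed {z : X | f z ≤ c} := hf.isClosed_preimage c
    have hU : IsOpen[coConvexTopology X] {z : X | f z ≤ c}ᶜ :=
      TopologicalSpace.isOpen_generateFrom_of_mem ⟨{z : X | f z ≤ c}, hclosed, hconv c, rfl⟩
    have hx : x ∈ {z : X | f z ≤ c}ᶜ := fun hh => absurd hh (not_le.2 hc)
    have hmem : {z : X | f z ≤ c}ᶜ ∈ @nhds X (coConvexTopology X) x :=
      (@mem_nhds_iff X (coConvexTopology X) _ _).2 ⟨_, subset_rfl, hU, hx⟩
    filter_upwards [hmem] with z hz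
    exact lt_of_not_ge hz
  · intro y x c hc
    have hclosed : IsClosed {z : X | dist z y ≤ c} :=
      isClosed_le (Continuous.dist continuous_id continuous_const) continuous_const
    have hU : IsOpen[coConvexTopology X] {z : X | dist z y ≤ c}ᶜ :=
      TopologicalSpace.isOpen_generateFrom_of_mem
        ⟨{z : X | dist z y ≤ c}, hclosed, hball y c, rfl⟩
    have hx : x ∈ {z : X | dist z y ≤ c}ᶜ := fun hh => absurd hh (not_le.2 hc)
    have hmem : {z : X | dist z y ≤ c}ᶜ ∈ @nhds X (coConvexTopology X) x :=
      (@mem_nhds_iff X (coConvexTopology X) _ _).2 ⟨_, subset_rfl, hU, hx⟩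
    filter_upwards [hmem] with z hz
    exact lt_of_not_ge hz
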